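/- Let L, D be positive integers and X ∈ ℝ^{L×D} be a nonzero matrix whose rows X^1, …, X^L all have Euclidean norm 1. Then trace((X·Xᵀ)²) ≥ L² / eRank(X); equivalently, ‖X·Xᵀ‖_F² ≥ L² / eRank(X). -/

import Mathlib

open Matrix

lemma herm_trace_eq {n : ℕ} {A : Matrix (Fin n) (Fin n) ℝ} (hA : A.IsHermitian) :
    A.trace = ∑ i, hA.eigenvalues i := by
  nth_rewrite 1 [show A = (hA.eigenvectorUnitary : Matrix (Fin n) (Fin n) ℝ) * diagonal (RCLike.ofReal ∘ hA.eigenvalues) * star (hA.eigenvectorUnitary : Matrix (Fin n) (Fin n) ℝ) from hA.spectral_theorem]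
  rw [Matrix.trace_mul_cycle]
  have hU : star (hA.eigenvectorUnitary : Matrix (Fin n) (Fin n) ℝ) *
      (hA.eigenvectorUnitary : Matrix (Fin n) (Fin n) ℝ) = 1 :=
    Matrix.mem_unitaryGroup_iff'.mp (hA.eigenvectorUnitary).2
  rw [hU, one_mul]
  simp [Matrix.trace_diagonal]

lemma herm_trace_sq_eq {n : ℕ} {A : Matrix (Fin n) (Fin n) ℝ} (hA : A.IsHermitian) :
    (A * A).trace = ∑ i, hA.eigenvalues i ^ 2 := by
  have hU : star (hA.eigenvectorUnitary : Matrix (Fin n) (Fin n) ℝ) *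
      (hA.eigenvectorUnitary : Matrix (Fin n) (Fin n) ℝ) = 1 :=
    Matrix.mem_unitaryGroup_iff'.mp (hA.eigenvectorUnitary).2
  set U := (hA.eigenvectorUnitary : Matrix (Fin n) (Fin n) ℝ) with hUdef
  set d : Matrix (Fin n) (Fin n) ℝ := diagonal (RCLike.ofReal ∘ hA.eigenvalues) with hd
  have hAeq : A = U * d * star U := hA.spectral_theorem
  have : A * A = U * (d * d) * star U := by
    rw [hAeq]
    calc U * d * star U * (U * d * star U)
        = U * d * ((star U * U) * (d * star U)) := by simp only [mul_assoc]
      _ = U * (d * d) * star U := by rw [hU, one_mul]; simp only [mul_assoc]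
  rw [this, Matrix.trace_mul_cycle, hU, one_mul]
  simp [hd, diagonal_mul_diagonal, Matrix.trace_diagonal, sq]

lemma exp_entropy_le {n : ℕ} (p : Fin n → ℝ) (hp : ∀ i, 0 ≤ p i) (hs : ∑ i, p i = 1) :
    Real.exp (∑ i, p i * Real.log (p i)) ≤ ∑ i, p i ^ 2 := by
  have h := convexOn_exp.map_sum_le (t := Finset.univ) (w := p) (p := fun i => Real.log (p i))
    (fun i _ => hp i) hs (fun i _ => Set.mem_univ _)
  simp only [smul_eq_mul] at h
  refine le_trans h (le_of_eq ?_)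
  refine Finset.sum_congr rfl fun i _ => ?_
  rcases eq_or_lt_of_le (hp i) with h0 | h0
  · simp [← h0]
  · rw [Real.exp_log h0, sq]

/-- `XᵀX` is Hermitian (symmetric) for a real matrix `X`. -/
theorem xtx_isHermitian {L D : ℕ} (X : Matrix (Fin L) (Fin D) ℝ) :
    (Xᵀ * X).IsHermitian := by
  simpa [Matrix.conjTranspose_eq_transpose_of_trivial] using
    Matrix.isHermitian_conjTranspose_mul_self X

/-- The effective rank `eRank(X) = exp(−∑_j p_j log p_j)`, where `λ_1, …, λ_D` are the
eigenvalues (with multiplicity) of the positive semidefinite matrix `XᵀX` and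
`p_j = λ_j / ∑_k λ_k` (with the convention `0 · log 0 = 0`). -/
noncomputable def eRank {L D : ℕ} (X : Matrix (Fin L) (Fin D) ℝ) : ℝ :=
  Real.exp (-∑ j,
    ((xtx_isHermitian X).eigenvalues j / ∑ k, (xtx_isHermitian X).eigenvalues k) *
      Real.log
        ((xtx_isHermitian X).eigenvalues j / ∑ k, (xtx_isHermitian X).eigenvalues k))

/-- If the rows of a nonzero matrix `X ∈ ℝ^{L×D}` all have Euclidean norm 1, then
`trace((XXᵀ)²) ≥ L² / eRank(X)`, i.e. `‖XXᵀ‖_F² ≥ L² / eRank(X)`. -/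
theorem trace_sq_ge_sq_div_eRank (L D : ℕ) (hL : 0 < L) (hD : 0 < D)
    (X : Matrix (Fin L) (Fin D) ℝ) (hX : X ≠ 0)
    (hrow : ∀ l, ∑ j, (X l j) ^ 2 = 1) :
    Matrix.trace ((X * Xᵀ) * (X * Xᵀ)) ≥ (L : ℝ) ^ 2 / _root_.eRank X := by
  have hL' : (0:ℝ) < (L:ℝ) := by exact_mod_cast hL
  have hnn : ∀ j, 0 ≤ (xtx_isHermitian X).eigenvalues j := fun j =>
    (by simpa [Matrix.conjTranspose_eq_transpose_of_trivial] using
      Matrix.posSemidef_conjTranspose_mul_self X : (Xᵀ * X).PosSemidef).eigenvalues_nonneg j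
  have htr : (Xᵀ * X).trace = (L : ℝ) := by
    simp only [Matrix.trace, Matrix.diag_apply, Matrix.mul_apply, Matrix.transpose_apply]
    rw [Finset.sum_comm]
    simp [← sq, hrow]
  have hsum : ∑ j, (xtx_isHermitian X).eigenvalues j = (L : ℝ) := by
    rw [← herm_trace_eq (xtx_isHermitian X)]; exact htr
  have hcyc : ((X * Xᵀ) * (X * Xᵀ)).trace = ((Xᵀ * X) * (Xᵀ * X)).trace := by
    rw [show (X * Xᵀ) * (X * Xᵀ) = X * (Xᵀ * X * Xᵀ) by simp only [Matrix.mul_assoc],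
        Matrix.trace_mul_comm,
        show Xᵀ * X * Xᵀ * X = (Xᵀ * X) * (Xᵀ * X) by simp only [Matrix.mul_assoc]]
  have htr2 : ((X * Xᵀ) * (X * Xᵀ)).trace = ∑ j, (xtx_isHermitian X).eigenvalues j ^ 2 :=
    hcyc.trans (herm_trace_sq_eq (xtx_isHermitian X))
  have hp : ∀ j, 0 ≤ (xtx_isHermitian X).eigenvalues j / (L:ℝ) :=
    fun j => div_nonneg (hnn j) hL'.le
  have hps : ∑ j, (xtx_isHermitian X).eigenvalues j / (L:ℝ) = 1 := by
    rw [← Finset.sum_div, hsum, div_self hL'.ne']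
  have hent := exp_entropy_le (fun j => (xtx_isHermitian X).eigenvalues j / (L:ℝ)) hp hps
  have herank : _root_.eRank X = Real.exp (-∑ j, ((xtx_isHermitian X).eigenvalues j / (L:ℝ)) *
      Real.log ((xtx_isHermitian X).eigenvalues j / (L:ℝ))) := by
    unfold _root_.eRank
    rw [hsum]
  rw [ge_iff_le]
  calc (L:ℝ)^2 / _root_.eRank X
      = (L:ℝ)^2 * Real.exp (∑ j, ((xtx_isHermitian X).eigenvalues j / (L:ℝ)) *
          Real.log ((xtx_isHermitian X).eigenvalues j / (L:ℝ))) := by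
        rw [herank, Real.exp_neg, div_inv_eq_mul]
    _ ≤ (L:ℝ)^2 * ∑ j, ((xtx_isHermitian X).eigenvalues j / (L:ℝ))^2 := by
        have h := mul_le_mul_of_nonneg_left hent (by positivity : (0:ℝ) ≤ (L:ℝ)^2)
        simpa using h
    _ = ∑ j, (xtx_isHermitian X).eigenvalues j ^ 2 := by
        rw [Finset.mul_sum]
        exact Finset.sum_congr rfl fun j _ => by rw [div_pow]; field_simp
    _ = ((X * Xᵀ) * (X * Xᵀ)).trace := htr2.symm
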